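/- Let α : V × V → W be a symmetric bilinear map into an inner product space, with curvature R(X,Y,Z,T) = ⟨α(X,T),α(Y,Z)⟩ − ⟨α(X,Z),α(Y,T)⟩, nullity Γ of R, and relative nullity Δ_α of α. If dim Γ = dim Δ_α + dim W, then R = 0 (i.e., the curvature tensor vanishes identically, so Γ = V). -/

import Mathlib

open Module LinearMap RealInnerProductSpace

section GramAux

variable {W : Type*} [NormedAddCommGroup W] [InnerProductSpace ℝ W]

private lemma gram_mulVec {m : ℕ} (v : Fin m → W) (c : Fin m → ℝ) (j : Fin m) :
    (Matrix.of fun i j : Fin m => ⟪v i, v j⟫).mulVec c j = ⟪v j, ∑ i, c i • v i⟫ := by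
  simp [Matrix.mulVec, dotProduct, inner_sum, real_inner_smul_right, mul_comm]

private lemma linearIndependent_iff_gram_det {m : ℕ} (v : Fin m → W) :
    LinearIndependent ℝ v ↔ (Matrix.of fun i j : Fin m => ⟪v i, v j⟫).det ≠ 0 := by
  constructor
  · intro h hdet
    obtain ⟨c, hc0, hcv⟩ := Matrix.exists_mulVec_eq_zero_iff.mpr hdet
    have hsum : ∑ i, c i • v i = 0 := by
      have h2 : ⟪∑ j, c j • v j, ∑ i, c i • v i⟫ = 0 := by
        rw [sum_inner]
        have : ∀ j ∈ Finset.univ, ⟪c j • v j, ∑ i, c i • v i⟫ = (0:ℝ) := by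
          intro j _
          rw [real_inner_smul_left, ← gram_mulVec v c j, hcv]
          simp
        rw [Finset.sum_congr rfl this]
        simp
      exact inner_self_eq_zero.mp h2
    exact hc0 (funext fun i => Fintype.linearIndependent_iff.mp h c hsum i)
  · intro hdet
    by_contra h
    obtain ⟨c, hsum, i, hi⟩ := Fintype.not_linearIndependent_iff.mp h
    apply hdet
    apply Matrix.exists_mulVec_eq_zero_iff.mp
    refine ⟨c, fun hc => hi (by rw [hc]; rfl), ?_⟩
    funext j
    rw [gram_mulVec v c j, hsum]
    simp

end GramAux

/-- If equality `μ = ν + p` holds in the Chern–Kuiper inequalities, the curvature tensor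
vanishes identically. -/
theorem chern_kuiper_equality_flat
    {V W : Type*} [AddCommGroup V] [Module ℝ V] [FiniteDimensional ℝ V]
    [NormedAddCommGroup W] [InnerProductSpace ℝ W] [FiniteDimensional ℝ W]
    (α : V →ₗ[ℝ] V →ₗ[ℝ] W)
    (hsymm : ∀ X Y : V, α X Y = α Y X)
    (Γ : Submodule ℝ V)
    (hΓ : ∀ X : V, X ∈ Γ ↔
      ∀ Y Z T : V, ⟪α X T, α Y Z⟫ - ⟪α X Z, α Y T⟫ = 0)
    (heq : finrank ℝ Γ = finrank ℝ (ker α) + finrank ℝ W) :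
    ∀ X Y Z T : V, ⟪α X T, α Y Z⟫ = ⟪α X Z, α Y T⟫ := by
  classical
  -- the "flatness" property for elements of Γ
  have flat : ∀ (Q : Γ) (A B C : V), ⟪α (Q : V) A, α B C⟫ = ⟪α (Q : V) C, α B A⟫ := by
    intro Q A B C
    exact sub_eq_zero.mp (((hΓ (Q : V)).mp Q.2) B C A)
  -- the family of linear maps Γ → W, X ↦ α X Y
  set Lm : V → (Γ →ₗ[ℝ] W) := fun Y => (α.flip Y).domRestrict Γ with hLm
  have hLmapp : ∀ (Y : V) (X : Γ), Lm Y X = α (X : V) Y := fun Y X => rfl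
  set rf : V → ℕ := fun Y => finrank ℝ (range (Lm Y)) with hrf
  have hbdd : ∀ Y, rf Y ≤ finrank ℝ W := fun Y => Submodule.finrank_le _
  -- choose a regular element Y₀
  have hne : (Set.range rf).Nonempty := ⟨rf 0, ⟨0, rfl⟩⟩
  have hbd : BddAbove (Set.range rf) := ⟨finrank ℝ W, by rintro _ ⟨Y, rfl⟩; exact hbdd Y⟩
  obtain ⟨Y₀, hY₀⟩ := Nat.sSup_mem hne hbd
  have hmax : ∀ Y, rf Y ≤ rf Y₀ := fun Y => hY₀ ▸ le_csSup hbd ⟨Y, rfl⟩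
  -- main step: the kernel of Lm Y₀ is contained in the kernel of α
  have hker : ∀ X : Γ, Lm Y₀ X = 0 → (X : V) ∈ ker α := by
    intro X hX0
    have hXY₀ : α (X : V) Y₀ = 0 := hX0
    rw [mem_ker]
    apply LinearMap.ext
    intro Y
    rw [LinearMap.zero_apply]
    by_contra hu
    set u : W := α (X : V) Y with hu_def
    -- u is orthogonal to everything of the form α S Y₀, S ∈ Γ
    have hperp : ∀ S : Γ, ⟪u, α (S : V) Y₀⟫ = 0 := by
      intro S
      have := ((hΓ (X : V)).mp X.2) (S : V) Y₀ Y
      rw [hXY₀] at this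
      simpa using sub_eq_zero.mp this
    -- a basis of the range of Lm Y₀
    set r : ℕ := rf Y₀ with hr_def
    let b : Basis (Fin r) ℝ (range (Lm Y₀)) := finBasis ℝ (range (Lm Y₀))
    have hbmem : ∀ i, (b i : W) ∈ range (Lm Y₀) := fun i => (b i).2
    choose Xs hXs using fun i => mem_range.mp (hbmem i)
    set vv : Fin r → W := fun i => α ((Xs i : Γ) : V) Y₀ with hvv
    set aa : Fin r → W := fun i => α ((Xs i : Γ) : V) Y with haa
    have hvvb : ∀ i, vv i = (b i : W) := fun i => hXs i
    -- the perturbed families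
    set bvec : Fin (r + 1) → W := Fin.snoc vv u with hbvec
    set cvec : Fin (r + 1) → W := Fin.snoc aa 0 with hcvec
    set g : ℝ → ℝ :=
      fun t => (Matrix.of fun i j : Fin (r + 1) =>
        ⟪bvec i + t • cvec i, bvec j + t • cvec j⟫).det with hg_def
    have hgcont : Continuous g := by
      apply Continuous.matrix_det
      apply continuous_matrix
      intro i j
      exact Continuous.inner (by fun_prop) (by fun_prop)
    -- bvec is linearly independent
    have hvv_li : LinearIndependent ℝ vv := by
      have : LinearIndependent ℝ (fun i => (b i : W)) :=
        b.linearIndependent.map' (range (Lm Y₀)).subtype (Submodule.ker_subtype _)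
      have heqf : vv = fun i => (b i : W) := funext hvvb
      rw [heqf]; exact this
    have hunotmem : u ∉ Submodule.span ℝ (Set.range vv) := by
      intro hmem
      have hz : ∀ x ∈ Submodule.span ℝ (Set.range vv), ⟪u, x⟫ = 0 := by
        intro x hx
        induction hx using Submodule.span_induction with
        | mem x hx => obtain ⟨i, rfl⟩ := hx; exact hperp (Xs i)
        | zero => simp
        | add x y _ _ hx hy => rw [inner_add_right, hx, hy, add_zero]
        | smul c x _ hx => rw [real_inner_smul_right, hx, mul_zero]
      exact hu (inner_self_eq_zero.mp (hz u hmem))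
    have hbvec_li : LinearIndependent ℝ bvec :=
      linearIndependent_fin_snoc.mpr ⟨hvv_li, hunotmem⟩
    -- g 0 ≠ 0
    have hg0 : g 0 ≠ 0 := by
      have : g 0 = (Matrix.of fun i j : Fin (r + 1) => ⟪bvec i, bvec j⟫).det := by
        simp [hg_def]
      rw [this]
      exact (linearIndependent_iff_gram_det bvec).mp hbvec_li
    -- find t ≠ 0 with g t ≠ 0
    have hev : ∀ᶠ t in nhdsWithin (0:ℝ) {(0:ℝ)}ᶜ, g t ≠ 0 :=
      (hgcont.continuousAt.eventually_ne hg0).filter_mono nhdsWithin_le_nhds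
    obtain ⟨t, hgt, ht0⟩ := (hev.and eventually_mem_nhdsWithin).exists
    have ht0' : t ≠ 0 := ht0
    -- the perturbed family is linearly independent
    have hli : LinearIndependent ℝ (fun i => bvec i + t • cvec i) :=
      (linearIndependent_iff_gram_det _).mpr hgt
    -- and it lies in the range of Lm (Y₀ + t • Y)
    set p : Submodule ℝ W := range (Lm (Y₀ + t • Y)) with hp
    have hmem : ∀ i, bvec i + t • cvec i ∈ p := by
      intro i
      refine Fin.lastCases ?_ ?_ i
      · have h1 : bvec (Fin.last r) = u := Fin.snoc_last _ _
        have h2 : cvec (Fin.last r) = 0 := Fin.snoc_last _ _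
        rw [h1, h2, smul_zero, add_zero]
        have : u = t⁻¹ • (Lm (Y₀ + t • Y) X) := by
          rw [hLmapp, map_add, hXY₀, map_smul, zero_add, smul_smul,
            inv_mul_cancel₀ ht0', one_smul]
        rw [this]
        exact Submodule.smul_mem _ _ (mem_range_self _ _)
      · intro i
        have h1 : bvec i.castSucc = vv i := Fin.snoc_castSucc _ _ _
        have h2 : cvec i.castSucc = aa i := Fin.snoc_castSucc _ _ _
        rw [h1, h2]
        have : vv i + t • aa i = Lm (Y₀ + t • Y) (Xs i) := by
          rw [hLmapp, map_add, map_smul]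
        rw [this]
        exact mem_range_self _ _
    -- hence rf (Y₀ + t • Y) ≥ r + 1, contradicting maximality
    let v' : Fin (r + 1) → p := fun i => ⟨bvec i + t • cvec i, hmem i⟩
    have hv'li : LinearIndependent ℝ v' := by
      apply LinearIndependent.of_comp p.subtype
      have : (p.subtype ∘ v') = fun i => bvec i + t • cvec i := rfl
      rw [this]; exact hli
    have hcard := hv'li.fintype_card_le_finrank
    rw [Fintype.card_fin] at hcard
    have : rf (Y₀ + t • Y) ≤ r := hmax _
    have : finrank ℝ p ≤ r := this
    omega
  -- dimension count: the range of Lm Y₀ is all of W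
  have hrank := finrank_range_add_finrank_ker (Lm Y₀)
  have hkle : finrank ℝ (ker (Lm Y₀)) ≤ finrank ℝ (ker α) := by
    have hle : (ker (Lm Y₀)).map Γ.subtype ≤ ker α := by
      rintro x ⟨X, hX, rfl⟩
      exact hker X (mem_ker.mp hX)
    calc finrank ℝ (ker (Lm Y₀)) = finrank ℝ ((ker (Lm Y₀)).map Γ.subtype) :=
          (Submodule.finrank_map_subtype_eq Γ _).symm
      _ ≤ finrank ℝ (ker α) := Submodule.finrank_mono hle
  have hrle : finrank ℝ (range (Lm Y₀)) ≤ finrank ℝ W := Submodule.finrank_le _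
  have htop : range (Lm Y₀) = ⊤ := by
    apply Submodule.eq_top_of_finrank_eq
    omega
  have hsurj : ∀ w : W, ∃ S : Γ, α (S : V) Y₀ = w := by
    intro w
    obtain ⟨S, hS⟩ := mem_range.mp (htop ▸ Submodule.mem_top (x := w))
    exact ⟨S, hS⟩
  -- conclusion
  intro X Y Z T
  obtain ⟨S, hS⟩ := hsurj (α Y Z)
  obtain ⟨S', hS'⟩ := hsurj (α Y T)
  have key : α (S : V) T = α (S' : V) Z := by
    have horth : ∀ w : W, ⟪α (S : V) T - α (S' : V) Z, w⟫ = 0 := by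
      intro w
      obtain ⟨Q, rfl⟩ := hsurj w
      rw [inner_sub_left]
      have e1 : ⟪α (S : V) T, α (Q : V) Y₀⟫ = ⟪α Y Z, α (Q : V) T⟫ := by
        rw [flat S T (Q : V) Y₀, hS]
      have e2 : ⟪α (S' : V) Z, α (Q : V) Y₀⟫ = ⟪α Y T, α (Q : V) Z⟫ := by
        rw [flat S' Z (Q : V) Y₀, hS']
      have e3 : ⟪α Y Z, α (Q : V) T⟫ = ⟪α Y T, α (Q : V) Z⟫ := by
        rw [real_inner_comm, flat Q T Y Z, real_inner_comm]
      rw [e1, e2, e3, sub_self]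
    exact sub_eq_zero.mp (inner_self_eq_zero.mp (horth _))
  calc ⟪α X T, α Y Z⟫ = ⟪α X T, α (S : V) Y₀⟫ := by rw [hS]
    _ = ⟪α (S : V) Y₀, α X T⟫ := real_inner_comm _ _
    _ = ⟪α (S : V) T, α X Y₀⟫ := (flat S T X Y₀).symm
    _ = ⟪α (S' : V) Z, α X Y₀⟫ := by rw [key]
    _ = ⟪α (S' : V) Y₀, α X Z⟫ := flat S' Z X Y₀
    _ = ⟪α Y T, α X Z⟫ := by rw [hS']
    _ = ⟪α X Z, α Y T⟫ := real_inner_comm _ _
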